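/- Let V be a 2-dimensional vector space over a field k and M : V → V a linear map with eigenvalues α, β (i.e. diagonalizable with char poly (X−α)(X−β)). Then the linear map A on V ⊗ V defined by A(v ⊗ w) = (M w) ⊗ v has characteristic polynomial (X − α)(X − β)(X² − αβ). -/

import Mathlib

open TensorProduct Polynomial Matrix

set_option maxHeartbeats 1600000 in
/-- The twisted swap `A(v ⊗ w) = (M w) ⊗ v` on `V ⊗ V`, for `M` diagonalizable on a
2-dimensional `V` with eigenvalues `α, β`, has characteristic polynomial
`(X − α)(X − β)(X² − αβ)`. -/
theorem charpoly_twisted_swap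
    {k : Type*} [Field k] {V : Type*} [AddCommGroup V] [Module k V]
    [FiniteDimensional k V]
    (M : V →ₗ[k] V) (α β : k)
    (b : Module.Basis (Fin 2) k V)
    (hb0 : M (b 0) = α • b 0) (hb1 : M (b 1) = β • b 1)
    (A : V ⊗[k] V →ₗ[k] V ⊗[k] V)
    (hA : ∀ v w : V, A (v ⊗ₜ[k] w) = (M w) ⊗ₜ[k] v) :
    LinearMap.charpoly A = (X - C α) * (X - C β) * (X ^ 2 - C (α * β)) := by
  classical
  set B := Module.Basis.tensorProduct b b with hB
  set e : (Fin 2 × Fin 2) ≃ Fin 4 := finProdFinEquiv.trans (finCongr (by norm_num)) with he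
  have key : LinearMap.toMatrix B B A =
      (Matrix.reindex e.symm e.symm
        (!![α,0,0,0; 0,0,α,0; 0,β,0,0; 0,0,0,β] : Matrix (Fin 4) (Fin 4) k)) := by
    ext ⟨p1, p2⟩ ⟨q1, q2⟩
    rw [LinearMap.toMatrix_apply, hB, Module.Basis.tensorProduct_apply, hA]
    fin_cases p1 <;> fin_cases p2 <;> fin_cases q1 <;> fin_cases q2 <;>
      simp [he, hb0, hb1, smul_tmul', Module.Basis.tensorProduct_repr_tmul_apply,
        Matrix.reindex_apply, finProdFinEquiv, finCongr, Matrix.vecHead, Matrix.vecTail,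
        -Prod.mk_zero_zero, -Prod.mk_one_one]
  rw [← LinearMap.charpoly_toMatrix A B, key, Matrix.charpoly_reindex]
  have hc : charmatrix (!![α,0,0,0; 0,0,α,0; 0,β,0,0; 0,0,0,β] : Matrix (Fin 4) (Fin 4) k)
      = !![X - C α, 0, 0, 0; 0, X, -C α, 0; 0, -C β, X, 0; 0, 0, 0, X - C β] := by
    ext i j
    fin_cases i <;> fin_cases j <;>
      simp [charmatrix_apply, Matrix.one_apply, Matrix.vecHead, Matrix.vecTail]
  rw [Matrix.charpoly, hc]
  simp [Matrix.det_succ_row_zero, Fin.sum_univ_succ, Fin.succAbove,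
    Matrix.vecHead, Matrix.vecTail]
  ring
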